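/- For every m ≥ 1, all n, k, l ∈ ℕ and every r > 0 there exists a constant C = C(n,k,l) > 0 such that for every smooth function f on the closed ball B̄_r ⊂ ℝ^m that is flat at the origin, one has |f|_{n,k+l,r} ≤ C · |f|_{n+l,k,r}. -/

import Mathlib

open Metric Set

/-- The norm `|f|_{n,k,r}`: the `C^n` norm (over the punctured closed ball) of the
function `x ↦ |x|^{-k} f(x)`. -/
noncomputable def weightedCnNorm (m : ℕ) (r : ℝ) (n k : ℕ)
    (f : EuclideanSpace ℝ (Fin m) → ℝ) : ℝ :=
  ⨆ p : (closedBall (0 : EuclideanSpace ℝ (Fin m)) r \ {0} :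
      Set (EuclideanSpace ℝ (Fin m))) × Fin (n + 1),
    ‖iteratedFDerivWithin ℝ p.2
      (fun y : EuclideanSpace ℝ (Fin m) => ‖y‖ ^ (-(k : ℤ)) * f y)
      (closedBall 0 r) p.1‖

section AuxLemmas

open Filter

variable {m : ℕ}

lemma aux_nhds {x : EuclideanSpace ℝ (Fin m)} (hx : x ≠ 0) (s : Set (EuclideanSpace ℝ (Fin m))) :
    (s \ {0} : Set (EuclideanSpace ℝ (Fin m))) =ᶠ[nhds x] s := by
  rw [Filter.eventuallyEq_set]
  filter_upwards [isOpen_compl_singleton.mem_nhds (by simpa using hx)] with y hy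
  simp only [Set.mem_diff, Set.mem_singleton_iff, and_iff_left_iff_imp]
  intro _; simpa using hy

lemma aux_congr_set {F : Type*} [NormedAddCommGroup F] [NormedSpace ℝ F]
    {f : EuclideanSpace ℝ (Fin m) → F} {s : Set (EuclideanSpace ℝ (Fin m))}
    {x : EuclideanSpace ℝ (Fin m)} (hx : x ≠ 0) (i : ℕ) :
    iteratedFDerivWithin ℝ i f (s \ {0}) x = iteratedFDerivWithin ℝ i f s x :=
  iteratedFDerivWithin_congr_set (aux_nhds hx s) i

lemma aux_udo_s {r : ℝ} (hr : 0 < r) :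
    UniqueDiffOn ℝ (closedBall (0 : EuclideanSpace ℝ (Fin m)) r) :=
  uniqueDiffOn_convex (convex_closedBall _ _)
    ⟨0, ball_subset_interior_closedBall (mem_ball_self hr)⟩

lemma aux_udo_t {r : ℝ} (hr : 0 < r) :
    UniqueDiffOn ℝ (closedBall (0 : EuclideanSpace ℝ (Fin m)) r \ {0}) := by
  intro x hx
  have hx0 : x ≠ 0 := by simpa using hx.2
  have h := aux_udo_s (m := m) hr x hx.1
  exact (uniqueDiffWithinAt_congr
    (nhdsWithin_eq_iff_eventuallyEq.2 (aux_nhds hx0 _)).symm).1 h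

lemma aux_w_smooth (c : ℕ) {x : EuclideanSpace ℝ (Fin m)} (hx : x ≠ 0) :
    ContDiffAt ℝ (⊤ : ℕ∞) (fun y : EuclideanSpace ℝ (Fin m) => ‖y‖ ^ (-(c : ℤ))) x := by
  have h1 : ContDiffAt ℝ (⊤ : ℕ∞) (fun y : EuclideanSpace ℝ (Fin m) => ‖y‖) x :=
    contDiffAt_norm ℝ hx
  have h2 : ContDiffAt ℝ (⊤ : ℕ∞) (fun y : EuclideanSpace ℝ (Fin m) => (‖y‖ ^ c)⁻¹) x :=
    (h1.pow c).inv (pow_ne_zero c (norm_ne_zero_iff.2 hx))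
  have he : (fun y : EuclideanSpace ℝ (Fin m) => ‖y‖ ^ (-(c : ℤ)))
      = fun y : EuclideanSpace ℝ (Fin m) => (‖y‖ ^ c)⁻¹ := by
    funext y; rw [zpow_neg, zpow_natCast]
  rw [he]; exact h2

lemma aux_transfer {F : Type*} [NormedAddCommGroup F] [NormedSpace ℝ F]
    {f : EuclideanSpace ℝ (Fin m) → F} {U t : Set (EuclideanSpace ℝ (Fin m))}
    (hU : UniqueDiffOn ℝ U) (ht : UniqueDiffOn ℝ t) (hsub : t ⊆ U)
    (hf : ContDiffOn ℝ (⊤ : ℕ∞) f U) {x : EuclideanSpace ℝ (Fin m)} (hx : x ∈ t) (i : ℕ) :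
    iteratedFDerivWithin ℝ i f t x = iteratedFDerivWithin ℝ i f U x := by
  have h := (hf.ftaylorSeriesWithin hU).mono hsub
  exact (h.eq_iteratedFDerivWithin_of_uniqueDiffOn (by exact_mod_cast le_top) ht hx).symm

lemma exists_uniform_const {P : ℕ → ℝ → Prop}
    (hmono : ∀ i C C', C ≤ C' → P i C → P i C')
    (h : ∀ i, ∃ C, 0 ≤ C ∧ P i C) (N : ℕ) :
    ∃ C, 0 ≤ C ∧ ∀ i ≤ N, P i C := by
  induction N with
  | zero =>
    obtain ⟨C, hC0, hC⟩ := h 0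
    exact ⟨C, hC0, fun i hi => by rw [Nat.le_zero.1 hi]; exact hC⟩
  | succ N IH =>
    obtain ⟨C, hC0, hC⟩ := IH
    obtain ⟨C', hC'0, hC'⟩ := h (N + 1)
    refine ⟨max C C', le_trans hC0 (le_max_left _ _), fun i hi => ?_⟩
    rcases Nat.lt_or_ge i (N + 1) with h' | h'
    · exact hmono i C _ (le_max_left _ _) (hC i (Nat.lt_succ_iff.1 h'))
    · have : i = N + 1 := le_antisymm hi h'
      rw [this]; exact hmono _ C' _ (le_max_right _ _) hC'

lemma flat_taylor {r : ℝ} (hr : 0 < r) {f : EuclideanSpace ℝ (Fin m) → ℝ}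
    (hf : ContDiffOn ℝ (⊤ : ℕ∞) f (closedBall 0 r))
    (hflat : ∀ i : ℕ, iteratedFDerivWithin ℝ i f (closedBall 0 r) 0 = 0) :
    ∀ (i j : ℕ) (B : ℝ),
      (∀ y ∈ closedBall (0 : EuclideanSpace ℝ (Fin m)) r,
        ‖iteratedFDerivWithin ℝ (j + i) f (closedBall 0 r) y‖ ≤ B) →
      ∀ x ∈ closedBall (0 : EuclideanSpace ℝ (Fin m)) r,
        ‖iteratedFDerivWithin ℝ j f (closedBall 0 r) x‖ ≤ ‖x‖ ^ i * B := by
  intro i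
  induction i with
  | zero => intro j B hB x hx; simpa using hB x hx
  | succ i IH =>
    intro j B hB x hx
    set s : Set (EuclideanSpace ℝ (Fin m)) := closedBall 0 r with hs
    have hxr : ‖x‖ ≤ r := mem_closedBall_zero_iff.1 hx
    have husub : closedBall (0 : EuclideanSpace ℝ (Fin m)) ‖x‖ ⊆ s :=
      closedBall_subset_closedBall hxr
    have hB0 : 0 ≤ B := by
      have h0 := hB 0 (mem_closedBall_self hr.le)
      rw [hflat (j + (i + 1))] at h0
      simpa using h0
    have hIH : ∀ y ∈ s, ‖iteratedFDerivWithin ℝ (j + 1) f s y‖ ≤ ‖y‖ ^ i * B := by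
      refine IH (j + 1) B (fun y hy => ?_)
      rw [show j + 1 + i = j + (i + 1) by omega]
      exact hB y hy
    have hdiff : DifferentiableOn ℝ (iteratedFDerivWithin ℝ j f s) s :=
      hf.differentiableOn_iteratedFDerivWithin (by exact_mod_cast lt_top_iff_ne_top.2 (by simp))
        (uniqueDiffOn_convex (convex_closedBall _ _)
          ⟨0, ball_subset_interior_closedBall (mem_ball_self hr)⟩)
    have mvt := (convex_closedBall (0 : EuclideanSpace ℝ (Fin m))
        ‖x‖).norm_image_sub_le_of_norm_hasFDerivWithin_le
      (f' := fun y => fderivWithin ℝ (iteratedFDerivWithin ℝ j f s) s y)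
      (fun y hy => ((hdiff y (husub hy)).hasFDerivWithinAt).mono husub)
      (fun y hy => by
        rw [norm_fderivWithin_iteratedFDerivWithin]
        calc ‖iteratedFDerivWithin ℝ (j + 1) f s y‖ ≤ ‖y‖ ^ i * B := hIH y (husub hy)
          _ ≤ ‖x‖ ^ i * B := by
            have hyx : ‖y‖ ≤ ‖x‖ := mem_closedBall_zero_iff.1 hy
            gcongr)
      (mem_closedBall_self (norm_nonneg x))
      (mem_closedBall_zero_iff.2 le_rfl)
    rw [hflat j] at mvt
    simp only [sub_zero, norm_zero] at mvt
    calc ‖iteratedFDerivWithin ℝ j f s x‖ ≤ ‖x‖ ^ i * B * ‖x‖ := mvt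
      _ = ‖x‖ ^ (i + 1) * B := by rw [pow_succ]; ring

lemma w_bound (c i : ℕ) :
    ∃ C, 0 ≤ C ∧ ∀ x : EuclideanSpace ℝ (Fin m), x ≠ 0 →
      ‖iteratedFDeriv ℝ i (fun y : EuclideanSpace ℝ (Fin m) => ‖y‖ ^ (-(c : ℤ))) x‖
        ≤ C * ‖x‖ ^ (-(c : ℤ) - (i : ℤ)) := by
  classical
  set w : EuclideanSpace ℝ (Fin m) → ℝ := fun y => ‖y‖ ^ (-(c : ℤ)) with hw
  set U : Set (EuclideanSpace ℝ (Fin m)) := {(0 : EuclideanSpace ℝ (Fin m))}ᶜ with hUdef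
  have hUopen : IsOpen U := isOpen_compl_singleton
  have hUuniq : UniqueDiffOn ℝ U := hUopen.uniqueDiffOn
  have hwU : ContDiffOn ℝ (⊤ : ℕ∞) w U := fun y hy =>
    (aux_w_smooth c (by simpa [hUdef] using hy)).contDiffWithinAt
  have hfull : ∀ y ∈ U, iteratedFDerivWithin ℝ i w U y = iteratedFDeriv ℝ i w y :=
    iteratedFDerivWithin_of_isOpen i hUopen
  have hcont : ContinuousOn (fun y => iteratedFDeriv ℝ i w y) U := by
    have h := hwU.continuousOn_iteratedFDerivWithin (m := i) (by exact_mod_cast le_top) hUuniq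
    exact h.congr fun y hy => (hfull y hy).symm
  have hsubs : sphere (0 : EuclideanSpace ℝ (Fin m)) 1 ⊆ U := fun y hy => by
    have : ‖y‖ = 1 := mem_sphere_zero_iff_norm.1 hy
    simp only [hUdef, mem_compl_iff, mem_singleton_iff]
    intro h; rw [h] at this; simp at this
  obtain ⟨C₀, hC₀⟩ :=
    (isCompact_sphere (0 : EuclideanSpace ℝ (Fin m)) 1).exists_bound_of_continuousOn
      (hcont.mono hsubs)
  refine ⟨max C₀ 0, le_max_right _ _, fun x hx => ?_⟩
  have ha : (0 : ℝ) < ‖x‖ := norm_pos_iff.2 hx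
  set a : ℝ := ‖x‖ with hadef
  have hane : a ≠ 0 := ha.ne'
  set u : EuclideanSpace ℝ (Fin m) := a⁻¹ • x with hudef
  have hu1 : ‖u‖ = 1 := by
    rw [hudef, norm_smul, norm_inv, Real.norm_eq_abs, abs_of_pos ha]
    field_simp
    exact hadef.symm
  have huU : u ∈ U := hsubs (mem_sphere_zero_iff_norm.2 hu1)
  have hxU : x ∈ U := by simpa [hUdef] using hx
  set g : EuclideanSpace ℝ (Fin m) →L[ℝ] EuclideanSpace ℝ (Fin m)
    := a⁻¹ • ContinuousLinearMap.id ℝ _ with hgdef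
  have hgapp : ∀ y, g y = a⁻¹ • y := fun y => rfl
  have hgpre : g ⁻¹' U = U := by
    ext y
    simp only [hUdef, mem_preimage, mem_compl_iff, mem_singleton_iff, hgapp,
      smul_eq_zero, inv_eq_zero]
    tauto
  have hgx : g x ∈ U := by rw [hgapp]; exact huU
  have hcomp := ContinuousLinearMap.iteratedFDerivWithin_comp_right g hwU hUuniq
    (by rw [hgpre]; exact hUuniq) hgx (i := i) (by exact_mod_cast le_top)
  rw [hgpre] at hcomp
  set κ : ℝ := a ^ (c : ℤ) with hκdef
  have hκpos : 0 < κ := zpow_pos ha _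
  have hwg : (w ∘ g) = κ • w := by
    funext y
    have h1 : ‖(a⁻¹ : ℝ) • y‖ = a⁻¹ * ‖y‖ := by
      rw [norm_smul, norm_inv, Real.norm_eq_abs, abs_of_pos ha]
    have h2 : (a⁻¹ : ℝ) ^ (-(c : ℤ)) = κ := by
      rw [inv_zpow, ← zpow_neg, neg_neg]
    simp only [Function.comp_apply, hgapp, Pi.smul_apply, smul_eq_mul, hw, h1, mul_zpow, h2]
  have hsmul : iteratedFDerivWithin ℝ i (κ • w) U x = κ • iteratedFDerivWithin ℝ i w U x :=
    iteratedFDerivWithin_const_smul_apply ((hwU x hxU).of_le (by exact_mod_cast le_top)) hUuniq hxU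
  have e2 : κ • iteratedFDerivWithin ℝ i w U x
      = (iteratedFDerivWithin ℝ i w U u).compContinuousLinearMap (fun _ => g) := by
    rw [← hsmul, ← hwg, hcomp, hgapp]
  have hgle : ‖g‖ ≤ a⁻¹ := by
    apply ContinuousLinearMap.opNorm_le_bound _ (inv_nonneg.2 ha.le)
    intro y
    rw [hgapp, norm_smul, norm_inv, Real.norm_eq_abs, abs_of_pos ha]
  have hnorm : κ * ‖iteratedFDeriv ℝ i w x‖ ≤ max C₀ 0 * a⁻¹ ^ i := by
    have h1 : ‖κ • iteratedFDerivWithin ℝ i w U x‖ = κ * ‖iteratedFDerivWithin ℝ i w U x‖ := by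
      rw [norm_smul, Real.norm_eq_abs, abs_of_pos hκpos]
    have h2 : ‖(iteratedFDerivWithin ℝ i w U u).compContinuousLinearMap (fun _ => g)‖
        ≤ ‖iteratedFDerivWithin ℝ i w U u‖ * ∏ _j : Fin i, ‖g‖ :=
      ContinuousMultilinearMap.norm_compContinuousLinearMap_le _ _
    have h3 : (∏ _j : Fin i, ‖g‖) = ‖g‖ ^ i := by
      rw [Finset.prod_const, Finset.card_univ, Fintype.card_fin]
    have h4 : ‖iteratedFDerivWithin ℝ i w U u‖ ≤ max C₀ 0 := by
      rw [hfull u huU]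
      exact le_trans (hC₀ u (mem_sphere_zero_iff_norm.2 hu1)) (le_max_left _ _)
    have h5 : ‖g‖ ^ i ≤ a⁻¹ ^ i := by gcongr
    rw [← hfull x hxU, ← h1, e2]
    calc ‖(iteratedFDerivWithin ℝ i w U u).compContinuousLinearMap (fun _ => g)‖
        ≤ ‖iteratedFDerivWithin ℝ i w U u‖ * ‖g‖ ^ i := by rw [← h3]; exact h2
      _ ≤ max C₀ 0 * a⁻¹ ^ i := by
          apply mul_le_mul h4 h5 (by positivity) (le_max_right _ _)
  have h2i : (a⁻¹ : ℝ) ^ i = a ^ (-(i : ℤ)) := by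
    rw [inv_pow, ← zpow_natCast a i, ← zpow_neg]
  calc ‖iteratedFDeriv ℝ i w x‖
      = a ^ (-(c : ℤ)) * (κ * ‖iteratedFDeriv ℝ i w x‖) := by
        rw [← mul_assoc, hκdef, ← zpow_add₀ hane]
        simp
    _ ≤ a ^ (-(c : ℤ)) * (max C₀ 0 * a⁻¹ ^ i) :=
        mul_le_mul_of_nonneg_left hnorm (by positivity)
    _ = max C₀ 0 * (a ^ (-(c : ℤ)) * a ^ (-(i : ℤ))) := by rw [h2i]; ring
    _ = max C₀ 0 * a ^ (-(c : ℤ) - (i : ℤ)) := by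
        rw [← zpow_add₀ hane, sub_eq_add_neg]

end AuxLemmas

set_option maxHeartbeats 1600000 in
/-- for all `m ≥ 1`, `n k l : ℕ` and `r > 0` there is `C > 0` such that for
every smooth `f` on `B̄_r` flat at the origin, `|f|_{n,k+l,r} ≤ C |f|_{n+l,k,r}`. -/
theorem weightedCnNorm_weight_shift :
    ∀ m : ℕ, 1 ≤ m → ∀ n k l : ℕ, ∀ r : ℝ, 0 < r →
      ∃ C > (0 : ℝ), ∀ f : EuclideanSpace ℝ (Fin m) → ℝ,
        ContDiffOn ℝ (⊤ : ℕ∞) f (closedBall 0 r) →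
        (∀ i : ℕ, iteratedFDerivWithin ℝ i f (closedBall 0 r) 0 = 0) →
        weightedCnNorm m r n (k + l) f ≤ C * weightedCnNorm m r (n + l) k f := by
  intro m _hm n k l r hr
  classical
  obtain ⟨Cl, hCl0, hCl⟩ := exists_uniform_const
    (P := fun i C => ∀ x : EuclideanSpace ℝ (Fin m), x ≠ 0 →
      ‖iteratedFDeriv ℝ i (fun y : EuclideanSpace ℝ (Fin m) => ‖y‖ ^ (-(l : ℤ))) x‖
        ≤ C * ‖x‖ ^ (-(l : ℤ) - (i : ℤ)))
    (fun i C C' hCC' hP x hx => le_trans (hP x hx)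
      (mul_le_mul_of_nonneg_right hCC' (by positivity)))
    (fun i => w_bound l i) n
  obtain ⟨Ck, hCk0, hCk⟩ := exists_uniform_const
    (P := fun i C => ∀ x : EuclideanSpace ℝ (Fin m), x ≠ 0 →
      ‖iteratedFDeriv ℝ i (fun y : EuclideanSpace ℝ (Fin m) => ‖y‖ ^ (-(k : ℤ))) x‖
        ≤ C * ‖x‖ ^ (-(k : ℤ) - (i : ℤ)))
    (fun i C C' hCC' hP x hx => le_trans (hP x hx)
      (mul_le_mul_of_nonneg_right hCC' (by positivity)))
    (fun i => w_bound k i) (n + l)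
  refine ⟨2 ^ n * Cl + 1, by positivity, fun f hf hflat => ?_⟩
  set s : Set (EuclideanSpace ℝ (Fin m)) := closedBall 0 r with hsdef
  set t : Set (EuclideanSpace ℝ (Fin m)) := s \ {0} with htdef
  have hts : t ⊆ s := diff_subset
  have udos : UniqueDiffOn ℝ s := aux_udo_s hr
  have udot : UniqueDiffOn ℝ t := aux_udo_t hr
  have hUopen : IsOpen ({(0 : EuclideanSpace ℝ (Fin m))}ᶜ : Set _) := isOpen_compl_singleton
  have hUuniq : UniqueDiffOn ℝ ({(0 : EuclideanSpace ℝ (Fin m))}ᶜ : Set _) :=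
    hUopen.uniqueDiffOn
  have htU : t ⊆ ({(0 : EuclideanSpace ℝ (Fin m))}ᶜ : Set _) := fun y hy => by
    simpa using hy.2
  set wk : EuclideanSpace ℝ (Fin m) → ℝ := fun y => ‖y‖ ^ (-(k : ℤ)) with hwk
  set wl : EuclideanSpace ℝ (Fin m) → ℝ := fun y => ‖y‖ ^ (-(l : ℤ)) with hwl
  set gk : EuclideanSpace ℝ (Fin m) → ℝ := fun y => wk y * f y with hgk
  have hwkU : ContDiffOn ℝ (⊤ : ℕ∞) wk ({(0 : EuclideanSpace ℝ (Fin m))}ᶜ : Set _) :=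
    fun y hy => (aux_w_smooth k (by simpa using hy)).contDiffWithinAt
  have hwlU : ContDiffOn ℝ (⊤ : ℕ∞) wl ({(0 : EuclideanSpace ℝ (Fin m))}ᶜ : Set _) :=
    fun y hy => (aux_w_smooth l (by simpa using hy)).contDiffWithinAt
  have hwk_t : ContDiffOn ℝ (⊤ : ℕ∞) wk t := hwkU.mono htU
  have hwl_t : ContDiffOn ℝ (⊤ : ℕ∞) wl t := hwlU.mono htU
  have hf_t : ContDiffOn ℝ (⊤ : ℕ∞) f t := hf.mono hts
  have hgk_t : ContDiffOn ℝ (⊤ : ℕ∞) gk t := hwk_t.mul hf_t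
  -- uniform bound on derivatives of f
  obtain ⟨Mf, hMf0, hMf⟩ := exists_uniform_const
    (P := fun a C => ∀ y ∈ s, ‖iteratedFDerivWithin ℝ a f s y‖ ≤ C)
    (fun a C C' h hP y hy => le_trans (hP y hy) h)
    (fun a => by
      obtain ⟨C, hC⟩ :=
        (isCompact_closedBall (0 : EuclideanSpace ℝ (Fin m)) r).exists_bound_of_continuousOn
          (hf.continuousOn_iteratedFDerivWithin (m := a) (by exact_mod_cast le_top) udos)
      exact ⟨max C 0, le_max_right _ _, fun y hy => le_trans (hC y hy) (le_max_left _ _)⟩)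
    (n + l + k + 1)
  -- zpow collapse identity
  have hcol : ∀ (x : EuclideanSpace ℝ (Fin m)), x ≠ 0 → ∀ (z : ℤ) (e : ℕ),
      ‖x‖ ^ z * ‖x‖ ^ e = ‖x‖ ^ (z + (e : ℤ)) := fun x hx z e => by
    rw [← zpow_natCast ‖x‖ e, ← zpow_add₀ (norm_ne_zero_iff.2 hx)]
  -- Lemma C : derivatives of gk are O(‖x‖) near the origin
  have lemC : ∀ p ≤ n + l, ∀ x ∈ t, ‖iteratedFDerivWithin ℝ p gk t x‖
      ≤ 2 ^ (n + l) * Ck * Mf * ‖x‖ := by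
    intro p hp x hx
    have hx0 : x ≠ 0 := by simpa using hx.2
    have hxs : x ∈ s := hx.1
    have hleib := norm_iteratedFDerivWithin_mul_le (𝕜 := ℝ) hwk_t hf_t udot hx (n := p)
      (by exact_mod_cast le_top)
    have hterm : ∀ j ∈ Finset.range (p + 1),
        (p.choose j : ℝ) * ‖iteratedFDerivWithin ℝ j wk t x‖ *
          ‖iteratedFDerivWithin ℝ (p - j) f t x‖
        ≤ (p.choose j : ℝ) * (Ck * Mf * ‖x‖) := by
      intro j hj
      have hjp : j ≤ p := Nat.lt_succ_iff.1 (Finset.mem_range.1 hj)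
      have h1 : ‖iteratedFDerivWithin ℝ j wk t x‖ ≤ Ck * ‖x‖ ^ (-(k : ℤ) - (j : ℤ)) := by
        rw [aux_transfer hUuniq udot htU hwkU hx j,
          iteratedFDerivWithin_of_isOpen (𝕜 := ℝ) (f := wk) j hUopen (htU hx)]
        exact hCk j (le_trans hjp hp) x hx0
      have h2 : ‖iteratedFDerivWithin ℝ (p - j) f t x‖ ≤ ‖x‖ ^ (k + j + 1) * Mf := by
        rw [htdef, aux_congr_set hx0 (p - j)]
        exact flat_taylor hr hf hflat (k + j + 1) (p - j) Mf
          (fun y hy => hMf (p - j + (k + j + 1)) (by omega) y hy) x hxs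
      calc (p.choose j : ℝ) * ‖iteratedFDerivWithin ℝ j wk t x‖ *
            ‖iteratedFDerivWithin ℝ (p - j) f t x‖
          ≤ (p.choose j : ℝ) * (Ck * ‖x‖ ^ (-(k : ℤ) - (j : ℤ))) * (‖x‖ ^ (k + j + 1) * Mf) := by
            gcongr
        _ = (p.choose j : ℝ) * (Ck * Mf * (‖x‖ ^ (-(k : ℤ) - (j : ℤ)) * ‖x‖ ^ (k + j + 1))) := by
            ring
        _ = (p.choose j : ℝ) * (Ck * Mf * ‖x‖) := by
            rw [hcol x hx0 (-(k : ℤ) - (j : ℤ)) (k + j + 1),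
              show -(k : ℤ) - (j : ℤ) + ((k + j + 1 : ℕ) : ℤ) = 1 by push_cast; ring, zpow_one]
    have hsum : (∑ j ∈ Finset.range (p + 1), (p.choose j : ℝ)) = 2 ^ p := by
      rw [← Nat.cast_sum, Nat.sum_range_choose]
      push_cast; ring
    calc ‖iteratedFDerivWithin ℝ p gk t x‖
        ≤ ∑ j ∈ Finset.range (p + 1), (p.choose j : ℝ) * ‖iteratedFDerivWithin ℝ j wk t x‖ *
            ‖iteratedFDerivWithin ℝ (p - j) f t x‖ := hleib
      _ ≤ ∑ j ∈ Finset.range (p + 1), (p.choose j : ℝ) * (Ck * Mf * ‖x‖) :=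
          Finset.sum_le_sum hterm
      _ = (2 : ℝ) ^ p * (Ck * Mf * ‖x‖) := by rw [← Finset.sum_mul, hsum]
      _ ≤ (2 : ℝ) ^ (n + l) * (Ck * Mf * ‖x‖) := by
          have h2p : (2 : ℝ) ^ p ≤ 2 ^ (n + l) := by
            apply pow_le_pow_right₀ one_le_two hp
          have : (0 : ℝ) ≤ Ck * Mf * ‖x‖ := by positivity
          nlinarith
      _ = 2 ^ (n + l) * Ck * Mf * ‖x‖ := by ring
  -- G and its basic properties
  set G := weightedCnNorm m r (n + l) k f with hGdef
  have hG0 : 0 ≤ G := by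
    rw [hGdef]
    exact Real.iSup_nonneg fun _ => norm_nonneg _
  have hbdd : BddAbove (Set.range fun pr : ↥(s \ {0}) × Fin (n + l + 1) =>
      ‖iteratedFDerivWithin ℝ (pr.2 : ℕ) gk s pr.1‖) := by
    refine ⟨2 ^ (n + l) * Ck * Mf * r, ?_⟩
    rintro v ⟨⟨⟨x, hx⟩, p⟩, rfl⟩
    have hx0 : x ≠ 0 := by simpa using hx.2
    have h1 : iteratedFDerivWithin ℝ (p : ℕ) gk s x = iteratedFDerivWithin ℝ (p : ℕ) gk t x := by
      rw [htdef, aux_congr_set hx0]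
    simp only [h1]
    calc ‖iteratedFDerivWithin ℝ (p : ℕ) gk t x‖ ≤ 2 ^ (n + l) * Ck * Mf * ‖x‖ :=
          lemC p (by omega) x hx
      _ ≤ 2 ^ (n + l) * Ck * Mf * r := by
          have := mem_closedBall_zero_iff.1 hx.1
          have h0 : (0:ℝ) ≤ 2 ^ (n + l) * Ck * Mf := by positivity
          nlinarith
  have hGmem : ∀ (x : EuclideanSpace ℝ (Fin m)), x ∈ t → ∀ p : ℕ, p ≤ n + l →
      ‖iteratedFDerivWithin ℝ p gk t x‖ ≤ G := by
    intro x hx p hp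
    have hx0 : x ≠ 0 := by simpa using hx.2
    have h1 : iteratedFDerivWithin ℝ p gk t x = iteratedFDerivWithin ℝ p gk s x := by
      rw [htdef, aux_congr_set hx0]
    rw [h1]
    have h2 := le_ciSup hbdd (⟨⟨x, hx⟩, ⟨p, by omega⟩⟩ : ↥(s \ {0}) × Fin (n + l + 1))
    exact h2
  -- Lemma B : flatness bound for gk in terms of G
  have lemB : ∀ (q p : ℕ), p + q ≤ n + l → ∀ x, x ∈ t →
      ‖iteratedFDerivWithin ℝ p gk t x‖ ≤ ‖x‖ ^ q * G := by
    intro q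
    induction q with
    | zero =>
      intro p hp x hx
      simpa using hGmem x hx p (by omega)
    | succ q IH =>
      intro p hp x hx
      have hx0 : x ≠ 0 := by simpa using hx.2
      have hxr : ‖x‖ ≤ r := mem_closedBall_zero_iff.1 hx.1
      have hdiff : DifferentiableOn ℝ (iteratedFDerivWithin ℝ p gk t) t :=
        hgk_t.differentiableOn_iteratedFDerivWithin
          (by exact_mod_cast lt_top_iff_ne_top.2 (by simp)) udot
      apply le_of_forall_pos_le_add
      intro ε hε
      set D : ℝ := 2 ^ (n + l) * Ck * Mf * ‖x‖ with hDdef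
      have hD0 : 0 ≤ D := by rw [hDdef]; positivity
      set θ : ℝ := min 1 (ε / (D + 1)) with hθdef
      have hθ0 : 0 < θ := lt_min one_pos (div_pos hε (by linarith))
      have hθ1 : θ ≤ 1 := min_le_left _ _
      have hseg : ∀ y ∈ segment ℝ (θ • x) x, y ∈ t ∧ ‖y‖ ≤ ‖x‖ := by
        intro y hy
        rw [segment_eq_image] at hy
        obtain ⟨u, hu, rfl⟩ := hy
        have hu0 : (0:ℝ) ≤ u := hu.1
        have hu1 : u ≤ 1 := hu.2
        have hrep : (1 - u) • (θ • x) + u • x = ((1 - u) * θ + u) • x := by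
          rw [smul_smul, ← add_smul]
        show ((1 - u) • (θ • x) + u • x) ∈ t ∧ ‖(1 - u) • (θ • x) + u • x‖ ≤ ‖x‖
        rw [hrep]
        have hcc0 : 0 < (1 - u) * θ + u := by nlinarith
        have hcc1 : (1 - u) * θ + u ≤ 1 := by nlinarith
        have hn : ‖((1 - u) * θ + u) • x‖ = ((1 - u) * θ + u) * ‖x‖ := by
          rw [norm_smul, Real.norm_eq_abs, abs_of_pos hcc0]
        refine ⟨⟨?_, ?_⟩, ?_⟩
        · rw [hsdef, mem_closedBall_zero_iff, hn]
          nlinarith [norm_nonneg x]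
        · simp only [mem_singleton_iff]
          exact smul_ne_zero hcc0.ne' hx0
        · rw [hn]; nlinarith [norm_nonneg x]
      have hzt : (θ • x) ∈ t := (hseg _ (left_mem_segment ℝ (θ • x) x)).1
      have hmvt := (convex_segment (θ • x) x).norm_image_sub_le_of_norm_hasFDerivWithin_le
        (f' := fun y => fderivWithin ℝ (iteratedFDerivWithin ℝ p gk t) t y)
        (fun y hy => ((hdiff y (hseg y hy).1).hasFDerivWithinAt).mono
          (fun y' hy' => (hseg y' hy').1))
        (fun y hy => by
          rw [norm_fderivWithin_iteratedFDerivWithin]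
          calc ‖iteratedFDerivWithin ℝ (p + 1) gk t y‖ ≤ ‖y‖ ^ q * G :=
                IH (p + 1) (by omega) y (hseg y hy).1
            _ ≤ ‖x‖ ^ q * G := by
                have := (hseg y hy).2
                gcongr)
        (left_mem_segment ℝ (θ • x) x)
        (right_mem_segment ℝ (θ • x) x)
      have hxz : ‖x - θ • x‖ ≤ ‖x‖ := by
        have h1 : x - θ • x = (1 - θ) • x := by
          rw [sub_smul, one_smul]
        rw [h1, norm_smul, Real.norm_eq_abs, abs_of_nonneg (by linarith)]
        nlinarith [norm_nonneg x]
      have hz_small : ‖iteratedFDerivWithin ℝ p gk t (θ • x)‖ ≤ θ * D := by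
        have h := lemC p (by omega) (θ • x) hzt
        have hnz : ‖θ • x‖ = θ * ‖x‖ := by
          rw [norm_smul, Real.norm_eq_abs, abs_of_pos hθ0]
        rw [hnz] at h
        calc ‖iteratedFDerivWithin ℝ p gk t (θ • x)‖
            ≤ 2 ^ (n + l) * Ck * Mf * (θ * ‖x‖) := h
          _ = θ * D := by rw [hDdef]; ring
      have hθD : θ * D ≤ ε := by
        have h1 : θ ≤ ε / (D + 1) := min_le_right _ _
        calc θ * D ≤ (ε / (D + 1)) * (D + 1) := by
              apply mul_le_mul h1 (by linarith) hD0 (le_of_lt (div_pos hε (by linarith)))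
          _ = ε := div_mul_cancel₀ ε (by linarith)
      calc ‖iteratedFDerivWithin ℝ p gk t x‖
          ≤ ‖iteratedFDerivWithin ℝ p gk t x - iteratedFDerivWithin ℝ p gk t (θ • x)‖
            + ‖iteratedFDerivWithin ℝ p gk t (θ • x)‖ := by
            have := norm_add_le (iteratedFDerivWithin ℝ p gk t x
              - iteratedFDerivWithin ℝ p gk t (θ • x)) (iteratedFDerivWithin ℝ p gk t (θ • x))
            simpa using this
        _ ≤ ‖x‖ ^ q * G * ‖x - θ • x‖ + θ * D := add_le_add hmvt hz_small
        _ ≤ ‖x‖ ^ q * G * ‖x‖ + ε := by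
            have h0 : (0:ℝ) ≤ ‖x‖ ^ q * G := by positivity
            have := mul_le_mul_of_nonneg_left hxz h0
            nlinarith
        _ = ‖x‖ ^ (q + 1) * G + ε := by rw [pow_succ]; ring
  -- final pointwise estimate
  have hfinal : ∀ (x : EuclideanSpace ℝ (Fin m)), x ∈ t → ∀ j : ℕ, j ≤ n →
      ‖iteratedFDerivWithin ℝ j
        (fun y : EuclideanSpace ℝ (Fin m) => ‖y‖ ^ (-((k + l : ℕ) : ℤ)) * f y) s x‖
        ≤ 2 ^ n * Cl * G := by
    intro x hx j hj
    have hx0 : x ≠ 0 := by simpa using hx.2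
    have h1 : iteratedFDerivWithin ℝ j
        (fun y : EuclideanSpace ℝ (Fin m) => ‖y‖ ^ (-((k + l : ℕ) : ℤ)) * f y) s x
        = iteratedFDerivWithin ℝ j
          (fun y : EuclideanSpace ℝ (Fin m) => ‖y‖ ^ (-((k + l : ℕ) : ℤ)) * f y) t x := by
      rw [htdef, aux_congr_set hx0]
    rw [h1]
    have heq : Set.EqOn (fun y : EuclideanSpace ℝ (Fin m) => ‖y‖ ^ (-((k + l : ℕ) : ℤ)) * f y)
        (fun y => wl y * gk y) t := by
      intro y hy
      have hy0 : ‖y‖ ≠ 0 := norm_ne_zero_iff.2 (by simpa using hy.2)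
      show ‖y‖ ^ (-((k + l : ℕ) : ℤ)) * f y = wl y * (wk y * f y)
      rw [hwl, hwk]
      show ‖y‖ ^ (-((k + l : ℕ) : ℤ)) * f y = ‖y‖ ^ (-(l : ℤ)) * (‖y‖ ^ (-(k : ℤ)) * f y)
      rw [← mul_assoc, ← zpow_add₀ hy0]
      congr 2
      push_cast; ring
    rw [iteratedFDerivWithin_congr heq hx j]
    have hleib := norm_iteratedFDerivWithin_mul_le (𝕜 := ℝ) hwl_t hgk_t udot hx (n := j)
      (by exact_mod_cast le_top)
    have hterm : ∀ i ∈ Finset.range (j + 1),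
        (j.choose i : ℝ) * ‖iteratedFDerivWithin ℝ i wl t x‖ *
          ‖iteratedFDerivWithin ℝ (j - i) gk t x‖
        ≤ (j.choose i : ℝ) * (Cl * G) := by
      intro i hi
      have hij : i ≤ j := Nat.lt_succ_iff.1 (Finset.mem_range.1 hi)
      have h1 : ‖iteratedFDerivWithin ℝ i wl t x‖ ≤ Cl * ‖x‖ ^ (-(l : ℤ) - (i : ℤ)) := by
        rw [aux_transfer hUuniq udot htU hwlU hx i,
          iteratedFDerivWithin_of_isOpen (𝕜 := ℝ) (f := wl) i hUopen (htU hx)]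
        exact hCl i (le_trans hij hj) x hx0
      have h2 : ‖iteratedFDerivWithin ℝ (j - i) gk t x‖ ≤ ‖x‖ ^ (l + i) * G :=
        lemB (l + i) (j - i) (by omega) x hx
      calc (j.choose i : ℝ) * ‖iteratedFDerivWithin ℝ i wl t x‖ *
            ‖iteratedFDerivWithin ℝ (j - i) gk t x‖
          ≤ (j.choose i : ℝ) * (Cl * ‖x‖ ^ (-(l : ℤ) - (i : ℤ))) * (‖x‖ ^ (l + i) * G) := by
            gcongr
        _ = (j.choose i : ℝ) * (Cl * G * (‖x‖ ^ (-(l : ℤ) - (i : ℤ)) * ‖x‖ ^ (l + i))) := by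
            ring
        _ = (j.choose i : ℝ) * (Cl * G) := by
            rw [hcol x hx0 (-(l : ℤ) - (i : ℤ)) (l + i),
              show -(l : ℤ) - (i : ℤ) + ((l + i : ℕ) : ℤ) = 0 by push_cast; ring, zpow_zero,
              mul_one]
    have hsum : (∑ i ∈ Finset.range (j + 1), (j.choose i : ℝ)) = 2 ^ j := by
      rw [← Nat.cast_sum, Nat.sum_range_choose]
      push_cast; ring
    calc ‖iteratedFDerivWithin ℝ j (fun y => wl y * gk y) t x‖
        ≤ ∑ i ∈ Finset.range (j + 1), (j.choose i : ℝ) * ‖iteratedFDerivWithin ℝ i wl t x‖ *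
            ‖iteratedFDerivWithin ℝ (j - i) gk t x‖ := hleib
      _ ≤ ∑ i ∈ Finset.range (j + 1), (j.choose i : ℝ) * (Cl * G) := Finset.sum_le_sum hterm
      _ = (2 : ℝ) ^ j * (Cl * G) := by rw [← Finset.sum_mul, hsum]
      _ ≤ (2 : ℝ) ^ n * (Cl * G) := by
          have h2p : (2 : ℝ) ^ j ≤ 2 ^ n := by
            apply pow_le_pow_right₀ one_le_two hj
          have : (0 : ℝ) ≤ Cl * G := mul_nonneg hCl0 hG0
          nlinarith
      _ = 2 ^ n * Cl * G := by ring
  -- conclude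
  have hnn : 0 ≤ (2 ^ n * Cl + 1) * G := mul_nonneg (by positivity) hG0
  unfold weightedCnNorm
  apply Real.iSup_le _ hnn
  rintro ⟨⟨x, hx⟩, j⟩
  dsimp only
  calc ‖iteratedFDerivWithin ℝ (j : ℕ)
        (fun y : EuclideanSpace ℝ (Fin m) => ‖y‖ ^ (-((k + l : ℕ) : ℤ)) * f y) s x‖
      ≤ 2 ^ n * Cl * G := hfinal x hx j (by omega)
    _ ≤ (2 ^ n * Cl + 1) * G := by nlinarith
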